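/- arXiv:1607.05892 — 2 statements merged into one kernel-verified Lean document; each statement's English description precedes it below -/
import Mathlib

section
/- Let S be a finite generalized quadrangle of order (s,t) with s ≥ 2, S' a proper full subquadrangle of order (s,t') with t = s·t' and every subtended ovoid of S' θ-subtended (θ > 1), let A be the geometry of points and lines of S not in S', E the geometry of subtended ovoids and rosettes of S', and let γ : A → E be a θ-cover. For each point x of S', let x** denote the common point of S' incident (in S) with all lines of A whose γ-image is a rosette whose ovoids share x. Then for all distinct points x, y of S', x** and y** are collinear in S' if and only if x and y are collinear in S'; consequently the map x ↦ x**, together with the induced map on lines, is an automorphism of S'. -/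
namespace GQpaper

variable {P L : Type}

/-- Two points of a point-line geometry are collinear: they are equal or lie on a
common line. -/
def Collinear (I : P → L → Prop) (x y : P) : Prop :=
  x = y ∨ ∃ l : L, I x l ∧ I y l

/-- Generalized quadrangle axioms: two distinct points are on at most one common line,
and for every non-incident point-line pair `(x, l)` there is a unique pair `(y, M)`
with `x I M`, `y I M`, `y I l`. -/
def IsGQ (I : P → L → Prop) : Prop :=
  (∀ x y : P, x ≠ y → ∀ M N : L, I x M → I y M → I x N → I y N → M = N) ∧
  (∀ (x : P) (l : L), ¬ I x l → ∃! p : P × L, I x p.2 ∧ I p.1 p.2 ∧ I p.1 l)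

/-- Thick: every line has at least 3 points and every point is on at least 3 lines. -/
def Thick (I : P → L → Prop) : Prop :=
  (∀ l : L, ∃ x y z : P, x ≠ y ∧ y ≠ z ∧ x ≠ z ∧ I x l ∧ I y l ∧ I z l) ∧
  (∀ x : P, ∃ l m n : L, l ≠ m ∧ m ≠ n ∧ l ≠ n ∧ I x l ∧ I x m ∧ I x n)

/-- The induced incidence relation on a subgeometry `(P', L')`. -/
def SubIncid (I : P → L → Prop) (P' : Set P) (L' : Set L) : ↥P' → ↥L' → Prop :=
  fun x l => I x.1 l.1

/-- A subgeometry is full if every point of the ambient geometry incident with one of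
its lines belongs to it. -/
def IsFull (I : P → L → Prop) (P' : Set P) (L' : Set L) : Prop :=
  ∀ l ∈ L', ∀ x : P, I x l → x ∈ P'

/-- A geometrical hyperplane: each of its lines contains at least 2 of its points, and
every line of the ambient geometry either is a line of the subgeometry all of whose
points lie in the subgeometry, or contains exactly one point of the subgeometry. -/
def IsGeomHyperplane (I : P → L → Prop) (P' : Set P) (L' : Set L) : Prop :=
  (∀ l ∈ L', ∃ x y : P, x ≠ y ∧ x ∈ P' ∧ y ∈ P' ∧ I x l ∧ I y l) ∧
  (∀ l : L, (l ∈ L' ∧ ∀ x : P, I x l → x ∈ P') ∨ (l ∉ L' ∧ ∃! x : P, I x l ∧ x ∈ P'))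

/-- An ovoid of the subquadrangle `(P', L')`: a set of its points meeting every one of
its lines in exactly one point. -/
def IsOvoid (I : P → L → Prop) (P' : Set P) (L' : Set L) (O : Set P) : Prop :=
  O ⊆ P' ∧ ∀ l ∈ L', ∃! x : P, x ∈ O ∧ I x l

/-- The ovoid of `S'` subtended by an external point `x`: the points of `P'` collinear
with `x`. -/
def subtendedOvoid (I : P → L → Prop) (P' : Set P) (x : P) : Set P :=
  {y : P | y ∈ P' ∧ Collinear I x y}

/-- The rosette of ovoids determined by a line `l` (not in the subquadrangle): the set
of the ovoids subtended by the external points of `l`. -/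
def rosette (I : P → L → Prop) (P' : Set P) (l : L) : Set (Set P) :=
  {O : Set P | ∃ x : P, x ∉ P' ∧ I x l ∧ O = subtendedOvoid I P' x}

/-- Points of the geometry `A = S \ S'`. -/
abbrev APoint (P' : Set P) : Type := {x : P // x ∉ P'}

/-- Lines of the geometry `A = S \ S'`. -/
abbrev ALine (L' : Set L) : Type := {l : L // l ∉ L'}

/-- Incidence in the geometry `A`. -/
def AIncid (I : P → L → Prop) (P' : Set P) (L' : Set L) :
    APoint P' → ALine L' → Prop :=
  fun x l => I x.1 l.1

/-- Points of the geometry `E`: the subtended ovoids of `S'`. -/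
abbrev EPoint (I : P → L → Prop) (P' : Set P) : Type :=
  {O : Set P // ∃ x : P, x ∉ P' ∧ O = subtendedOvoid I P' x}

/-- Lines of the geometry `E`: the rosettes of subtended ovoids of `S'`. -/
abbrev ELine (I : P → L → Prop) (P' : Set P) (L' : Set L) : Type :=
  {R : Set (Set P) // ∃ l : L, l ∉ L' ∧ R = rosette I P' l}

/-- Incidence in `E`: membership of an ovoid in a rosette. -/
def EIncid (I : P → L → Prop) (P' : Set P) (L' : Set L) :
    EPoint I P' → ELine I P' L' → Prop :=
  fun O R => O.1 ∈ R.1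

/-- The canonical projection `π : A → E` on points. -/
def piPoint (I : P → L → Prop) (P' : Set P) : APoint P' → EPoint I P' :=
  fun x => ⟨subtendedOvoid I P' x.1, x.1, x.2, rfl⟩

/-- The canonical projection `π : A → E` on lines. -/
def piLine (I : P → L → Prop) (P' : Set P) (L' : Set L) : ALine L' → ELine I P' L' :=
  fun l => ⟨rosette I P' l.1, l.1, l.2, rfl⟩

/-- A morphism of point-line geometries: preserves incidence. -/
def IsMorphism {P₁ L₁ P₂ L₂ : Type} (I₁ : P₁ → L₁ → Prop) (I₂ : P₂ → L₂ → Prop)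
    (fp : P₁ → P₂) (fl : L₁ → L₂) : Prop :=
  ∀ x l, I₁ x l → I₂ (fp x) (fl l)

/-- A cover: a morphism which is locally bijective, i.e. for every point `x` it induces
a bijection between the lines through `x` and the lines through `fp x`, and dually. -/
def IsCover {P₁ L₁ P₂ L₂ : Type} (I₁ : P₁ → L₁ → Prop) (I₂ : P₂ → L₂ → Prop)
    (fp : P₁ → P₂) (fl : L₁ → L₂) : Prop :=
  IsMorphism I₁ I₂ fp fl ∧
  (∀ (x : P₁) (m : L₂), I₂ (fp x) m → ∃! l : L₁, I₁ x l ∧ fl l = m) ∧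
  (∀ (l : L₁) (y : P₂), I₂ y (fl l) → ∃! x : P₁, I₁ x l ∧ fp x = y)

/-- An isomorphism of point-line geometries: a bijective morphism whose inverse is a
morphism, equivalently a pair of bijections under which incidence corresponds. -/
def IsIso {P₁ L₁ P₂ L₂ : Type} (I₁ : P₁ → L₁ → Prop) (I₂ : P₂ → L₂ → Prop)
    (fp : P₁ → P₂) (fl : L₁ → L₂) : Prop :=
  Function.Bijective fp ∧ Function.Bijective fl ∧
  ∀ (x : P₁) (l : L₁), I₁ x l ↔ I₂ (fp x) (fl l)

/-- An automorphism of a point-line geometry. -/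
def IsAuto (I : P → L → Prop) (fp : P → P) (fl : L → L) : Prop :=
  IsIso I I fp fl

/-- A finite GQ has order `(s, t)` if every line carries `s + 1` points and every point
carries `t + 1` lines. -/
def HasOrder (I : P → L → Prop) (s t : ℕ) : Prop :=
  (∀ l : L, {x : P | I x l}.ncard = s + 1) ∧
  (∀ x : P, {l : L | I x l}.ncard = t + 1)

/-- Every subtended ovoid of `S'` is subtended by exactly `θ` external points. -/
def AllThetaSubtended (I : P → L → Prop) (P' : Set P) (θ : ℕ) : Prop :=
  ∀ x : P, x ∉ P' →
    {y : P | y ∉ P' ∧ subtendedOvoid I P' y = subtendedOvoid I P' x}.ncard = θ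

/-- The perp of a set of points: all points collinear with every point of the set. -/
def perpSet (I : P → L → Prop) (X : Set P) : Set P :=
  {z : P | ∀ y ∈ X, Collinear I z y}

/-- The action of a permutation of the points of `S'` on subsets of `P'`. -/
def ovMap (P' : Set P) (f : ↥P' → ↥P') (O : Set P) : Set P :=
  {z : P | ∃ y : ↥P', y.1 ∈ O ∧ (f y).1 = z}


section Aux

open Set

set_option linter.unusedSectionVars false

variable {P L : Type} [Finite P] [Finite L] {I : P → L → Prop} {P' : Set P} {L' : Set L}
  {s t t' θ : ℕ}

lemma collinear_symm {x y : P} (h : Collinear I x y) : Collinear I y x := by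
  rcases h with h | ⟨l, h1, h2⟩
  · exact Or.inl h.symm
  · exact Or.inr ⟨l, h2, h1⟩

lemma ncard_biUnion_eq {α β : Type} [Finite α] [Finite β] (S : Set α) (f : α → Set β) (k : ℕ)
    (hdisj : ∀ a ∈ S, ∀ b ∈ S, a ≠ b → Disjoint (f a) (f b))
    (hcard : ∀ a ∈ S, (f a).ncard = k) :
    (⋃ a ∈ S, f a).ncard = S.ncard * k := by
  classical
  have : Fintype α := Fintype.ofFinite α
  have : Fintype β := Fintype.ofFinite β
  have h1 : (⋃ a ∈ S, f a) = ↑(S.toFinset.biUnion (fun a => (f a).toFinset)) := by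
    ext b; simp
  rw [h1, ncard_coe_finset, Finset.card_biUnion]
  · rw [Finset.sum_congr rfl (fun a ha => ?_), Finset.sum_const, smul_eq_mul,
      ← Set.ncard_eq_toFinset_card' S]
    rw [← Set.ncard_eq_toFinset_card', hcard a (by simpa using ha)]
  · intro a ha b hb hab
    have := hdisj a (by simpa using ha) b (by simpa using hb) hab
    simpa [Finset.disjoint_left, Set.disjoint_left] using this

lemma subline_count (hSub2 : ∀ x : ↥P', {l : ↥L' | SubIncid I P' L' x l}.ncard = t' + 1)
    {u : P} (hu : u ∈ P') : {l : L | l ∈ L' ∧ I u l}.ncard = t' + 1 := by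
  have h1 : {l : L | l ∈ L' ∧ I u l}
      = Subtype.val '' {l : ↥L' | SubIncid I P' L' ⟨u, hu⟩ l} := by
    ext l
    constructor
    · rintro ⟨h1, h2⟩; exact ⟨⟨l, h1⟩, h2, rfl⟩
    · rintro ⟨⟨l', hl'⟩, h2, rfl⟩; exact ⟨hl', h2⟩
  rw [h1, Set.ncard_image_of_injective _ Subtype.coe_injective, hSub2]

lemma no_two (hGQ : IsGQ I) (hSubGQ : IsGQ (SubIncid I P' L'))
    (hSub2 : ∀ x : ↥P', {l : ↥L' | SubIncid I P' L' x l}.ncard = t' + 1)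
    {l : L} (hl : l ∉ L') {u v : P} (hu : u ∈ P') (hv : v ∈ P')
    (hIu : I u l) (hIv : I v l) : u = v := by
  by_contra hne
  by_cases hcol : ∃ m, m ∈ L' ∧ I u m ∧ I v m
  · obtain ⟨m, hm, h1, h2⟩ := hcol
    exact hl ((hGQ.1 u v hne m l h1 h2 hIu hIv) ▸ hm)
  · obtain ⟨m, hm⟩ := Set.nonempty_of_ncard_ne_zero
      (by rw [hSub2 ⟨u, hu⟩]; omega : {l : ↥L' | SubIncid I P' L' ⟨u, hu⟩ l}.ncard ≠ 0)
    have hvm' : ¬ I v m.1 := fun h => hcol ⟨m.1, m.2, hm, h⟩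
    obtain ⟨⟨y', N'⟩, ⟨hA, hB, hC⟩, -⟩ := hSubGQ.2 ⟨v, hv⟩ m hvm'
    obtain ⟨q, hq, huniq⟩ := hGQ.2 v m.1 hvm'
    have e1 : (u, l) = q := huniq (u, l) ⟨hIv, hIu, hm⟩
    have e2 : (y'.1, N'.1) = q := huniq _ ⟨hA, hB, hC⟩
    have : l = N'.1 := congrArg Prod.snd (e1.trans e2.symm)
    exact hl (this ▸ N'.2)

lemma ov_unique (hGQ : IsGQ I) (hFull : IsFull I P' L') {w : P} (hw : w ∉ P')
    {m : L} (hm : m ∈ L') : ∃! y : P, y ∈ subtendedOvoid I P' w ∧ I y m := by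
  have hwm : ¬ I w m := fun h => hw (hFull m hm w h)
  obtain ⟨⟨y, N⟩, ⟨h1, h2, h3⟩, huniq⟩ := hGQ.2 w m hwm
  refine ⟨y, ⟨⟨hFull m hm y h3, Or.inr ⟨N, h1, h2⟩⟩, h3⟩, ?_⟩
  rintro z ⟨⟨hzP, hcol⟩, hzm⟩
  rcases hcol with rfl | ⟨N', ha, hb⟩
  · exact absurd hzP hw
  · exact congrArg Prod.fst (huniq (z, N') ⟨ha, hb, hzm⟩)

lemma ovoid_card (hGQ : IsGQ I) (hSubGQ : IsGQ (SubIncid I P' L'))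
    (hOrd1 : ∀ l : L, {x : P | I x l}.ncard = s + 1)
    (hSub2 : ∀ x : ↥P', {l : ↥L' | SubIncid I P' L' x l}.ncard = t' + 1)
    (hFull : IsFull I P' L')
    {m₀ : L} (hm₀ : m₀ ∈ L') {O : Set P} (hO : O ⊆ P')
    (huniq : ∀ m ∈ L', ∃! y : P, y ∈ O ∧ I y m) : O.ncard = s * t' + 1 := by
  obtain ⟨p, ⟨hpO, hpm⟩, hpu⟩ := huniq m₀ hm₀
  have hpoint : ∀ n : L, ∃ y : P, n ∈ L' →
      ((y ∈ O ∧ I y n) ∧ ∀ z, z ∈ O → I z n → z = y) := by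
    intro n
    by_cases hn : n ∈ L'
    · obtain ⟨y, hy, hu⟩ := huniq n hn
      exact ⟨y, fun _ => ⟨hy, fun z h1 h2 => hu z ⟨h1, h2⟩⟩⟩
    · exact ⟨p, fun h => absurd h hn⟩
  choose g hg using hpoint
  set Y : Set P := {y | I y m₀ ∧ y ≠ p} with hYdef
  have hYcard : Y.ncard = s := by
    have h1 : Y = {x | I x m₀} \ {p} := by ext z; simp [hYdef]
    rw [h1, Set.ncard_diff_singleton_of_mem (show p ∈ {x : P | I x m₀} from hpm), hOrd1 m₀]
    omega
  set F : P → Set P := fun y => {z | z ∈ O ∧ ∃ n, n ∈ L' ∧ n ≠ m₀ ∧ I z n ∧ I y n} with hFdef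
  have hyO : ∀ y ∈ Y, y ∉ O := by
    intro y hy hyO
    exact hy.2 (hpu y ⟨hyO, hy.1⟩)
  have hFcard : ∀ y ∈ Y, (F y).ncard = t' := by
    intro y hy
    have hyP : y ∈ P' := hFull m₀ hm₀ y hy.1
    set Ny : Set L := {n | (n ∈ L' ∧ I y n) ∧ n ≠ m₀} with hNydef
    have hNy : Ny.ncard = t' := by
      have h1 : Ny = {n | n ∈ L' ∧ I y n} \ {m₀} := by ext n; simp [hNydef]
      rw [h1, Set.ncard_diff_singleton_of_mem
        (show m₀ ∈ {n : L | n ∈ L' ∧ I y n} from ⟨hm₀, hy.1⟩), subline_count hSub2 hyP]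
      omega
    have himg : F y = g '' Ny := by
      ext z
      constructor
      · rintro ⟨hzO, n, hn1, hn2, hn3, hn4⟩
        have := (hg n hn1).2 z hzO hn3
        exact ⟨n, ⟨⟨hn1, hn4⟩, hn2⟩, this.symm⟩
      · rintro ⟨n, ⟨⟨hn1, hn4⟩, hn2⟩, rfl⟩
        exact ⟨(hg n hn1).1.1, n, hn1, hn2, (hg n hn1).1.2, hn4⟩
    have hinj : Set.InjOn g Ny := by
      rintro n₁ ⟨⟨h11, h12⟩, h13⟩ n₂ ⟨⟨h21, h22⟩, h23⟩ he
      by_contra hne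
      have hz1 := (hg n₁ h11).1
      have hz2 := (hg n₂ h21).1
      have hzy : g n₁ ≠ y := fun e => hyO y hy (e ▸ hz1.1)
      exact hne (hGQ.1 (g n₁) y hzy n₁ n₂ hz1.2 h12 (he ▸ hz2.2) h22)
    rw [himg, Set.ncard_image_of_injOn hinj, hNy]
  have hdisj : ∀ y₁ ∈ Y, ∀ y₂ ∈ Y, y₁ ≠ y₂ → Disjoint (F y₁) (F y₂) := by
    intro y₁ hy₁ y₂ hy₂ hne
    rw [Set.disjoint_left]
    rintro z ⟨hzO, n₁, h11, h12, h13, h14⟩ ⟨-, n₂, h21, h22, h23, h24⟩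
    have hzm : ¬ I z m₀ := by
      intro h
      have hzp : z = p := hpu z ⟨hzO, h⟩
      subst hzp
      exact h12 (hGQ.1 z y₁ (fun e => hy₁.2 e.symm) n₁ m₀ h13 h14 h hy₁.1)
    obtain ⟨q, hq, hu⟩ := hGQ.2 z m₀ hzm
    have e1 : (y₁, n₁) = q := hu (y₁, n₁) ⟨h13, h14, hy₁.1⟩
    have e2 : (y₂, n₂) = q := hu (y₂, n₂) ⟨h23, h24, hy₂.1⟩
    exact hne (congrArg Prod.fst (e1.trans e2.symm))
  have hcover : O = insert p (⋃ y ∈ Y, F y) := by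
    ext z
    constructor
    · intro hz
      by_cases hzp : z = p
      · exact hzp ▸ Set.mem_insert _ _
      · have hzm : ¬ I z m₀ := fun h => hzp (hpu z ⟨hz, h⟩)
        obtain ⟨⟨y, n⟩, ⟨h1, h2, h3⟩, -⟩ := hGQ.2 z m₀ hzm
        have hyP : y ∈ P' := hFull m₀ hm₀ y h3
        have hzy : z ≠ y := fun e => hzm (e ▸ h3)
        have hnL : n ∈ L' := by
          by_contra hn
          exact hzy (no_two hGQ hSubGQ hSub2 hn (hO hz) hyP h1 h2)
        have hyp : y ≠ p := by
          intro e
          obtain ⟨w, -, hw⟩ := huniq n hnL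
          exact hzp ((hw z ⟨hz, h1⟩).trans (hw p ⟨hpO, e ▸ h2⟩).symm)
        have hnm : n ≠ m₀ := fun e => hzm (e ▸ h1)
        apply Set.mem_insert_of_mem
        exact Set.mem_biUnion (⟨h3, hyp⟩ : y ∈ Y) ⟨hz, n, hnL, hnm, h1, h2⟩
    · rintro (rfl | hz)
      · exact hpO
      · obtain ⟨y, -, hzF⟩ := Set.mem_iUnion₂.1 hz
        exact hzF.1
  have hpnot : p ∉ ⋃ y ∈ Y, F y := by
    intro hp
    obtain ⟨y, hy, -, n, hn1, hn2, hn3, hn4⟩ := Set.mem_iUnion₂.1 hp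
    exact hn2 (hGQ.1 y p hy.2 n m₀ hn4 hn3 hy.1 hpm)
  rw [hcover, Set.ncard_insert_of_notMem hpnot,
    ncard_biUnion_eq Y F t' hdisj hFcard, hYcard]

lemma trace_exists (hGQ : IsGQ I) (hSubGQ : IsGQ (SubIncid I P' L'))
    (hOrd1 : ∀ l : L, {x : P | I x l}.ncard = s + 1)
    (hOrd2 : ∀ x : P, {l : L | I x l}.ncard = t + 1)
    (hSub2 : ∀ x : ↥P', {l : ↥L' | SubIncid I P' L' x l}.ncard = t' + 1)
    (hFull : IsFull I P' L') (htst : t = s * t')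
    {m₀ : L} (hm₀ : m₀ ∈ L')
    {l : L} (hl : l ∉ L') : ∃! y : P, y ∈ P' ∧ I y l := by
  have hex : ∃ y : P, y ∈ P' ∧ I y l := by
    by_contra hno
    push_neg at hno
    obtain ⟨x, hx⟩ := Set.nonempty_of_ncard_ne_zero
      (by rw [hOrd1 l]; omega : {y : P | I y l}.ncard ≠ 0)
    have hxP : x ∉ P' := fun h => hno x h hx
    set O := subtendedOvoid I P' x with hOdef
    have hOcard : O.ncard = s * t' + 1 :=
      ovoid_card hGQ hSubGQ hOrd1 hSub2 hFull hm₀ (fun y hy => hy.1)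
        (fun m hm => ov_unique hGQ hFull hxP hm)
    have hline : ∀ y : P, ∃ n : L, y ∈ O → (I x n ∧ I y n) := by
      intro y
      by_cases hy : y ∈ O
      · rcases hy.2 with e | ⟨n, h1, h2⟩
        · exact absurd (e ▸ hy.1) hxP
        · exact ⟨n, fun _ => ⟨h1, h2⟩⟩
      · exact ⟨l, fun h => absurd h hy⟩
    choose f hf using hline
    have hinj : Set.InjOn f O := by
      intro y₁ h₁ y₂ h₂ he
      have hfn : f y₁ ∉ L' := fun hL =>
        hxP (hFull (f y₁) hL x (hf y₁ h₁).1)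
      exact no_two hGQ hSubGQ hSub2 hfn h₁.1 h₂.1 (hf y₁ h₁).2 (he ▸ (hf y₂ h₂).2)
    have hsub : insert l (f '' O) ⊆ {n : L | I x n} := by
      rintro n (rfl | ⟨y, hy, rfl⟩)
      · exact hx
      · exact (hf y hy).1
    have hlnot : l ∉ f '' O := by
      rintro ⟨y, hy, rfl⟩
      exact hno y hy.1 (hf y hy).2
    have h1 : (insert l (f '' O)).ncard = s * t' + 2 := by
      rw [Set.ncard_insert_of_notMem hlnot, Set.ncard_image_of_injOn hinj, hOcard]
    have h2 := Set.ncard_le_ncard hsub (Set.toFinite _)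
    rw [h1, hOrd2 x, htst] at h2
    omega
  obtain ⟨y, hy⟩ := hex
  exact ⟨y, hy, fun z hz =>
    no_two hGQ hSubGQ hSub2 hl hz.1 hy.1 hz.2 hy.2⟩

lemma degenerate_t'_zero (hGQ : IsGQ I)
    (hOrd1 : ∀ l : L, {x : P | I x l}.ncard = s + 1)
    (hOrd2 : ∀ x : P, {l : L | I x l}.ncard = t + 1)
    (hSub2 : ∀ x : ↥P', {l : ↥L' | SubIncid I P' L' x l}.ncard = t' + 1)
    (hFull : IsFull I P' L')
    (hProper : P' ≠ Set.univ ∨ L' ≠ Set.univ)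
    (htst : t = s * t') (hs : 2 ≤ s) (ht0 : t' = 0) (hne : P'.Nonempty) : False := by
  obtain ⟨x₀, hx₀⟩ := hne
  obtain ⟨n₀, hn₀⟩ := Set.nonempty_of_ncard_ne_zero
    (by rw [hSub2 ⟨x₀, hx₀⟩]; omega : {l : ↥L' | SubIncid I P' L' ⟨x₀, hx₀⟩ l}.ncard ≠ 0)
  have ht : t = 0 := by rw [htst, ht0, mul_zero]
  have key : ∀ z : P, I z n₀.1 := by
    intro z
    by_contra hz
    obtain ⟨⟨y, M⟩, ⟨h1, h2, h3⟩, -⟩ := hGQ.2 z n₀.1 hz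
    have hne' : M ≠ n₀.1 := fun e => hz (e ▸ h1)
    have h4 : 1 < {l : L | I y l}.ncard :=
      (Set.one_lt_ncard (Set.toFinite _)).2 ⟨M, h2, n₀.1, h3, hne'⟩
    rw [hOrd2 y, ht] at h4
    omega
  rcases hProper with hP | hL
  · obtain ⟨p, hp⟩ := (Set.ne_univ_iff_exists_notMem _).1 hP
    exact hp (hFull n₀.1 n₀.2 p (key p))
  · obtain ⟨m, hm⟩ := (Set.ne_univ_iff_exists_notMem _).1 hL
    obtain ⟨z₁, h₁, z₂, h₂, hne12⟩ := (Set.one_lt_ncard (Set.toFinite _)).1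
      (by rw [hOrd1 m]; omega : 1 < {x : P | I x m}.ncard)
    exact hm (by rw [hGQ.1 z₁ z₂ hne12 m n₀.1 h₁ h₂ (key z₁) (key z₂)]; exact n₀.2)

end Aux

/-- with `x ↦ x**` as in Statement 16, for distinct points `x, y` of
`S'`, `x**` and `y**` are collinear in `S'` iff `x` and `y` are; consequently `x ↦ x**`
together with an induced map on lines is an automorphism of `S'`. -/
theorem statement17 {P L : Type} [Finite P] [Finite L]
    (I : P → L → Prop) (P' : Set P) (L' : Set L) (s t t' θ : ℕ)
    (hGQ : IsGQ I) (hOrd : HasOrder I s t) (hs : 2 ≤ s)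
    (hSubGQ : IsGQ (SubIncid I P' L'))
    (hSubOrd : HasOrder (SubIncid I P' L') s t')
    (hFull : IsFull I P' L')
    (hProper : P' ≠ Set.univ ∨ L' ≠ Set.univ)
    (htst : t = s * t') (hθsub : AllThetaSubtended I P' θ) (hθ : 1 < θ)
    (gp : APoint P' → EPoint I P') (gl : ALine L' → ELine I P' L')
    (hcov : IsCover (AIncid I P' L') (EIncid I P' L') gp gl)
    (hfibp : ∀ O : EPoint I P', (gp ⁻¹' {O}).ncard = θ)
    (hfibl : ∀ R : ELine I P' L', (gl ⁻¹' {R}).ncard = θ)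
    (star : ↥P' → ↥P')
    (hstar_mem : ∀ x : ↥P', ∃ U : ALine L', ∀ O ∈ (gl U).1, x.1 ∈ O)
    (hstar : ∀ (x : ↥P') (U : ALine L'),
      (∀ O ∈ (gl U).1, x.1 ∈ O) → I (star x).1 U.1) :
    (∀ x y : ↥P', x ≠ y →
      (Collinear (SubIncid I P' L') (star x) (star y) ↔
        Collinear (SubIncid I P' L') x y)) ∧
    ∃ starl : ↥L' → ↥L', IsAuto (SubIncid I P' L') star starl := by
  classical
  obtain ⟨hOrd1, hOrd2⟩ := hOrd
  obtain ⟨hSub1, hSub2⟩ := hSubOrd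
  by_cases hne : P'.Nonempty
  case neg =>
    rw [Set.not_nonempty_iff_eq_empty] at hne
    subst hne
    have hemp : IsEmpty ↥(∅ : Set P) := by simp
    refine ⟨fun x => isEmptyElim x, id,
      ⟨fun a => isEmptyElim a, fun a => isEmptyElim a⟩,
      Function.bijective_id, fun x l => isEmptyElim x⟩
  case pos =>
  have ht'1 : 1 ≤ t' := by
    rcases Nat.eq_zero_or_pos t' with h0 | h1
    · exact absurd (degenerate_t'_zero hGQ hOrd1 hOrd2 hSub2 hFull hProper htst hs h0 hne) id
    · exact h1
  obtain ⟨x₀p, hx₀⟩ := hne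
  obtain ⟨m₀S, hm₀S⟩ := Set.nonempty_of_ncard_ne_zero
    (by rw [hSub2 ⟨x₀p, hx₀⟩]; omega :
      {l : ↥L' | SubIncid I P' L' ⟨x₀p, hx₀⟩ l}.ncard ≠ 0)
  have hL1 : ∀ l : L, l ∉ L' → ∀ u v : P, u ∈ P' → v ∈ P' → I u l → I v l → u = v :=
    fun l hl u v hu hv h1 h2 => no_two hGQ hSubGQ hSub2 hl hu hv h1 h2
  have hExt : ∀ (x : P) (l : L), x ∉ P' → I x l → l ∉ L' :=
    fun x l hx hI hl => hx (hFull _ hl _ hI)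
  have hTr : ∀ l : L, l ∉ L' → ∃! y : P, y ∈ P' ∧ I y l :=
    fun l hl => trace_exists hGQ hSubGQ hOrd1 hOrd2 hSub2 hFull htst m₀S.2 hl
  have htr' : ∀ l : L, ∃ y : P,
      l ∉ L' → (y ∈ P' ∧ I y l ∧ ∀ z, z ∈ P' → I z l → z = y) := by
    intro l
    by_cases hl : l ∉ L'
    · obtain ⟨y, hy, hu⟩ := hTr l hl
      exact ⟨y, fun _ => ⟨hy.1, hy.2, fun z h1 h2 => hu z ⟨h1, h2⟩⟩⟩
    · exact ⟨x₀p, fun h => absurd h hl⟩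
  choose trf htrf using htr'
  have hOvoid : ∀ w : P, w ∉ P' → (subtendedOvoid I P' w).ncard = s * t' + 1 :=
    fun w hw => ovoid_card hGQ hSubGQ hOrd1 hSub2 hFull m₀S.2 (fun y hy => hy.1)
      (fun m hm => ov_unique hGQ hFull hw hm)
  have hOvNC : ∀ w : P, w ∉ P' → ∀ u v : P, u ∈ subtendedOvoid I P' w →
      v ∈ subtendedOvoid I P' w → u ≠ v → ∀ m ∈ L', I u m → I v m → False := by
    intro w hw u v hu hv huv m hm h1 h2
    obtain ⟨y, -, hy⟩ := ov_unique hGQ hFull hw hm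
    exact huv ((hy u ⟨hu, h1⟩).trans (hy v ⟨hv, h2⟩).symm)
  -- counting lines through points
  have hLthru : ∀ p : P, p ∈ P' → {U : ALine L' | I p U.1}.ncard = s * t' - t' := by
    intro p hp
    have h1 : Subtype.val '' {U : ALine L' | I p U.1}
        = {l : L | I p l} \ {l : L | l ∈ L' ∧ I p l} := by
      ext l
      constructor
      · rintro ⟨⟨l', hl'⟩, h2, rfl⟩
        exact ⟨h2, fun h => hl' h.1⟩
      · rintro ⟨h2, h3⟩
        exact ⟨⟨l, fun h => h3 ⟨h, h2⟩⟩, h2, rfl⟩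
    have h2 : {U : ALine L' | I p U.1}.ncard = ({l : L | I p l} \ {l : L | l ∈ L' ∧ I p l}).ncard := by
      rw [← h1, Set.ncard_image_of_injective _ Subtype.coe_injective]
    rw [h2, Set.ncard_diff (fun l hl => hl.2) (Set.toFinite _), hOrd2 p,
      subline_count hSub2 hp, htst]
    omega
  have hkpos : 1 ≤ s * t' - t' := by
    have h2 : 2 * t' ≤ s * t' := Nat.mul_le_mul_right t' hs
    omega
  have hExtLineCard : ∀ a : P, a ∉ P' → {U : ALine L' | I a U.1}.ncard = s * t' + 1 := by
    intro a ha
    have h1 : Subtype.val '' {U : ALine L' | I a U.1} = {l : L | I a l} := by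
      ext l
      constructor
      · rintro ⟨⟨l', hl'⟩, h2, rfl⟩; exact h2
      · intro h2; exact ⟨⟨l, hExt a l ha h2⟩, h2, rfl⟩
    have h2 : {U : ALine L' | I a U.1}.ncard = {l : L | I a l}.ncard := by
      rw [← h1, Set.ncard_image_of_injective _ Subtype.coe_injective]
    rw [h2, hOrd2 a, htst]
  -- rosette base facts
  have hRosEx0 : ∀ (O : EPoint I P') (x : ↥P'), x.1 ∈ O.1 →
      ∃ R : ELine I P' L', EIncid I P' L' O R ∧ ∀ O' ∈ R.1, x.1 ∈ O' := by
    intro O x hx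
    obtain ⟨w, hw, hOw⟩ := O.2
    rw [hOw] at hx
    have hwx : w ≠ x.1 := fun e => hw (e ▸ x.2)
    obtain ⟨m, hm1, hm2⟩ : ∃ m : L, I w m ∧ I x.1 m := by
      rcases hx.2 with e | ⟨m, h1, h2⟩
      · exact absurd e hwx
      · exact ⟨m, h1, h2⟩
    have hmL : m ∉ L' := hExt w m hw hm1
    refine ⟨⟨rosette I P' m, m, hmL, rfl⟩, ?_, ?_⟩
    · exact ⟨w, hw, hm1, hOw⟩
    · rintro O' ⟨z, hz1, hz2, rfl⟩
      exact ⟨x.2, Or.inr ⟨m, hz2, hm2⟩⟩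
  have hTwoExt : ∀ m : L, m ∉ L' → ∃ z₁ z₂ : P,
      z₁ ∉ P' ∧ z₂ ∉ P' ∧ I z₁ m ∧ I z₂ m ∧ z₁ ≠ z₂ := by
    intro m hm
    have h1 : ({z : P | I z m} \ {trf m}).ncard = s := by
      rw [Set.ncard_diff_singleton_of_mem
        (show trf m ∈ {z : P | I z m} from (htrf m hm).2.1), hOrd1 m]
      omega
    obtain ⟨z₁, hz₁, z₂, hz₂, hne12⟩ := (Set.one_lt_ncard (Set.toFinite _)).1
      (by rw [h1]; omega)
    have hzP : ∀ z : P, z ∈ {z : P | I z m} \ {trf m} → z ∉ P' := by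
      rintro z ⟨h2, h3⟩ h4
      exact h3 ((htrf m hm).2.2 z h4 h2)
    exact ⟨z₁, z₂, hzP z₁ hz₁, hzP z₂ hz₂, hz₁.1, hz₂.1, hne12⟩
  have hBaseUnique : ∀ m : L, m ∉ L' → ∀ x : P, x ∈ P' →
      (∀ O ∈ rosette I P' m, x ∈ O) → x = trf m := by
    intro m hm x hx hall
    by_contra hnx
    obtain ⟨z₁, z₂, hp₁, hp₂, hi₁, hi₂, hne12⟩ := hTwoExt m hm
    have hxm : ¬ I x m := fun h => hnx ((htrf m hm).2.2 x hx h)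
    have h₁ : x ∈ subtendedOvoid I P' z₁ := hall _ ⟨z₁, hp₁, hi₁, rfl⟩
    have h₂ : x ∈ subtendedOvoid I P' z₂ := hall _ ⟨z₂, hp₂, hi₂, rfl⟩
    obtain ⟨n₁, hn₁, hn₁'⟩ : ∃ n : L, I z₁ n ∧ I x n := by
      rcases h₁.2 with e | ⟨n, ha, hb⟩
      · exact absurd (e ▸ h₁.1) hp₁
      · exact ⟨n, ha, hb⟩
    obtain ⟨n₂, hn₂, hn₂'⟩ : ∃ n : L, I z₂ n ∧ I x n := by
      rcases h₂.2 with e | ⟨n, ha, hb⟩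
      · exact absurd (e ▸ h₂.1) hp₂
      · exact ⟨n, ha, hb⟩
    obtain ⟨q, hq, hu⟩ := hGQ.2 x m hxm
    have e1 : (z₁, n₁) = q := hu (z₁, n₁) ⟨hn₁', hn₁, hi₁⟩
    have e2 : (z₂, n₂) = q := hu (z₂, n₂) ⟨hn₂', hn₂, hi₂⟩
    exact hne12 (congrArg Prod.fst (e1.trans e2.symm))
  have hInAllUnique : ∀ (R : ELine I P' L') (x y : ↥P'),
      (∀ O ∈ R.1, x.1 ∈ O) → (∀ O ∈ R.1, y.1 ∈ O) → x = y := by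
    intro R x y hx hy
    obtain ⟨m, hm, hR⟩ := R.2
    rw [hR] at hx hy
    exact Subtype.ext ((hBaseUnique m hm x.1 x.2 hx).trans
      (hBaseUnique m hm y.1 y.2 hy).symm)
  have hInAllExists : ∀ R : ELine I P' L', ∃ x : ↥P', ∀ O ∈ R.1, x.1 ∈ O := by
    intro R
    obtain ⟨m, hm, hR⟩ := R.2
    refine ⟨⟨trf m, (htrf m hm).1⟩, ?_⟩
    rw [hR]
    rintro O ⟨z, hz1, hz2, rfl⟩
    exact ⟨(htrf m hm).1, Or.inr ⟨m, hz2, (htrf m hm).2.1⟩⟩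
  have hGpSurj : ∀ O : EPoint I P', ∃ a : APoint P', gp a = O := by
    intro O
    obtain ⟨a, ha⟩ := Set.nonempty_of_ncard_ne_zero
      (by rw [hfibp O]; omega : (gp ⁻¹' {O}).ncard ≠ 0)
    exact ⟨a, ha⟩
  have hRosUniq : ∀ (O : EPoint I P') (R R' : ELine I P' L') (x : ↥P'),
      EIncid I P' L' O R → EIncid I P' L' O R' →
      (∀ O' ∈ R.1, x.1 ∈ O') → (∀ O' ∈ R'.1, x.1 ∈ O') → R = R' := by
    intro O R R' x hiR hiR' hxR hxR'
    obtain ⟨a, ha⟩ := hGpSurj O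
    obtain ⟨w, hw, hOw⟩ := O.2
    have hOP : O.1 ⊆ P' := by rw [hOw]; exact fun y hy => hy.1
    -- injection of rosettes through O into lines through a
    obtain ⟨U₀, hU₀⟩ := Set.nonempty_of_ncard_ne_zero
      (by rw [hExtLineCard a.1 a.2]; omega : {U : ALine L' | I a.1 U.1}.ncard ≠ 0)
    have hd : ∀ S : ELine I P' L', ∃ U : ALine L',
        EIncid I P' L' O S → (AIncid I P' L' a U ∧ gl U = S) := by
      intro S
      by_cases hS : EIncid I P' L' O S
      · obtain ⟨U, hU, -⟩ := hcov.2.1 a S (by rw [ha]; exact hS)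
        exact ⟨U, fun _ => hU⟩
      · exact ⟨U₀, fun h => absurd h hS⟩
    choose d hd' using hd
    have hdinj : Set.InjOn d {S : ELine I P' L' | EIncid I P' L' O S} := by
      intro S₁ h₁ S₂ h₂ he
      rw [← (hd' S₁ h₁).2, ← (hd' S₂ h₂).2, he]
    have hcard1 : {S : ELine I P' L' | EIncid I P' L' O S}.ncard ≤ s * t' + 1 := by
      rw [← Set.ncard_image_of_injOn hdinj, ← hExtLineCard a.1 a.2]
      exact Set.ncard_le_ncard (by rintro U ⟨S, hS, rfl⟩; exact (hd' S hS).1)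
        (Set.toFinite _)
    -- injection of points of O into rosettes through O
    have hc : ∀ y : P, ∃ S : ELine I P' L', y ∈ O.1 →
        (EIncid I P' L' O S ∧ ∀ O' ∈ S.1, y ∈ O') := by
      intro y
      by_cases hy : y ∈ O.1
      · obtain ⟨S, hS1, hS2⟩ := hRosEx0 O ⟨y, hOP hy⟩ hy
        exact ⟨S, fun _ => ⟨hS1, hS2⟩⟩
      · exact ⟨R, fun h => absurd h hy⟩
    choose c hc' using hc
    have hcinj : Set.InjOn c O.1 := by
      intro y₁ h₁ y₂ h₂ he
      have e := hInAllUnique (c y₁) ⟨y₁, hOP h₁⟩ ⟨y₂, hOP h₂⟩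
        (hc' y₁ h₁).2 (by rw [he]; exact (hc' y₂ h₂).2)
      exact congrArg Subtype.val e
    have hOcard : O.1.ncard = s * t' + 1 := by rw [hOw]; exact hOvoid w hw
    have him : c '' O.1 = {S : ELine I P' L' | EIncid I P' L' O S} := by
      apply Set.eq_of_subset_of_ncard_le
      · rintro S ⟨y, hy, rfl⟩; exact (hc' y hy).1
      · rw [Set.ncard_image_of_injOn hcinj, hOcard]; exact hcard1
      · exact Set.toFinite _
    obtain ⟨y₁, hy₁, hRy⟩ : R ∈ c '' O.1 := by rw [him]; exact hiR
    obtain ⟨y₂, hy₂, hRy'⟩ : R' ∈ c '' O.1 := by rw [him]; exact hiR'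
    have e₁ : x = ⟨y₁, hOP hy₁⟩ :=
      hInAllUnique R x ⟨y₁, hOP hy₁⟩ hxR (by rw [← hRy]; exact (hc' y₁ hy₁).2)
    have e₂ : x = ⟨y₂, hOP hy₂⟩ :=
      hInAllUnique R' x ⟨y₂, hOP hy₂⟩ hxR' (by rw [← hRy']; exact (hc' y₂ hy₂).2)
    have : y₁ = y₂ := congrArg Subtype.val (e₁.symm.trans e₂)
    rw [← hRy, ← hRy', this]
  -- each rosette contains exactly s ovoids
  have hRosCard : ∀ R : ELine I P' L', {O : EPoint I P' | EIncid I P' L' O R}.ncard = s := by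
    intro R
    obtain ⟨m, hm, hR⟩ := R.2
    obtain ⟨z₀, -, hz₀P, -, hz₀m, -, -⟩ := hTwoExt m hm
    set Zm : Set P := {z : P | I z m ∧ z ∉ P'} with hZmdef
    have hZmcard : Zm.ncard = s := by
      have h1 : Zm = {z : P | I z m} \ {trf m} := by
        ext z
        constructor
        · rintro ⟨h2, h3⟩
          exact ⟨h2, fun e => h3 (by rw [Set.mem_singleton_iff] at e; rw [e]; exact (htrf m hm).1)⟩
        · rintro ⟨h2, h3⟩
          exact ⟨h2, fun h4 => h3 ((htrf m hm).2.2 z h4 h2)⟩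
      rw [h1, Set.ncard_diff_singleton_of_mem
        (show trf m ∈ {z : P | I z m} from (htrf m hm).2.1), hOrd1 m]
      omega
    have he : ∀ z : P, ∃ Q : EPoint I P', z ∈ Zm → Q.1 = subtendedOvoid I P' z := by
      intro z
      by_cases hz : z ∈ Zm
      · exact ⟨⟨subtendedOvoid I P' z, z, hz.2, rfl⟩, fun _ => rfl⟩
      · exact ⟨⟨subtendedOvoid I P' z₀, z₀, hz₀P, rfl⟩, fun h => absurd h hz⟩
    choose e he' using he
    have himg : e '' Zm = {O : EPoint I P' | EIncid I P' L' O R} := by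
      ext O
      constructor
      · rintro ⟨z, hz, rfl⟩
        show (e z).1 ∈ R.1
        rw [hR, he' z hz]
        exact ⟨z, hz.2, hz.1, rfl⟩
      · intro hO
        have : O.1 ∈ rosette I P' m := by rw [← hR]; exact hO
        obtain ⟨z, hz1, hz2, hOz⟩ := this
        refine ⟨z, ⟨hz2, hz1⟩, ?_⟩
        exact Subtype.ext ((he' z ⟨hz2, hz1⟩).trans hOz.symm)
    have hinj : Set.InjOn e Zm := by
      intro z₁ h₁ z₂ h₂ hee
      by_contra hne12
      have hOeq : subtendedOvoid I P' z₁ = subtendedOvoid I P' z₂ := by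
        rw [← he' z₁ h₁, ← he' z₂ h₂, hee]
      obtain ⟨y, hy, hyne⟩ := Set.exists_ne_of_one_lt_ncard
        (by rw [hOvoid z₁ h₁.2]; have := Nat.one_le_iff_ne_zero.1 ht'1; nlinarith
          : 1 < (subtendedOvoid I P' z₁).ncard) (trf m)
      have hym : ¬ I y m := fun h => hyne ((htrf m hm).2.2 y hy.1 h)
      obtain ⟨n₁, hn₁, hn₁'⟩ : ∃ n : L, I z₁ n ∧ I y n := by
        rcases hy.2 with ev | ⟨n, ha, hb⟩
        · exact absurd (ev ▸ hy.1) h₁.2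
        · exact ⟨n, ha, hb⟩
      have hy2 : y ∈ subtendedOvoid I P' z₂ := hOeq ▸ hy
      obtain ⟨n₂, hn₂, hn₂'⟩ : ∃ n : L, I z₂ n ∧ I y n := by
        rcases hy2.2 with ev | ⟨n, ha, hb⟩
        · exact absurd (ev ▸ hy2.1) h₂.2
        · exact ⟨n, ha, hb⟩
      obtain ⟨q, hq, hu⟩ := hGQ.2 y m hym
      have e1 : (z₁, n₁) = q := hu (z₁, n₁) ⟨hn₁', hn₁, h₁.1⟩
      have e2 : (z₂, n₂) = q := hu (z₂, n₂) ⟨hn₂', hn₂, h₂.1⟩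
      exact hne12 (congrArg Prod.fst (e1.trans e2.symm))
    rw [← himg, Set.ncard_image_of_injOn hinj, hZmcard]
  -- number of subtended ovoids through a point of S'
  have hOthru : ∀ x : ↥P', {O : EPoint I P' | x.1 ∈ O.1}.ncard * θ = (s * t' - t') * s := by
    intro x
    set W : Set P := {w : P | w ∉ P' ∧ Collinear I w x.1} with hWdef
    -- first count : partition by subtended ovoid
    have hW1 : W.ncard = {O : EPoint I P' | x.1 ∈ O.1}.ncard * θ := by
      have hcover : W = ⋃ O ∈ {O : EPoint I P' | x.1 ∈ O.1},
          {w : P | w ∉ P' ∧ subtendedOvoid I P' w = O.1} := by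
        ext w
        constructor
        · rintro ⟨hw, hcol⟩
          refine Set.mem_biUnion (t := fun O : EPoint I P' => {w : P | w ∉ P' ∧ subtendedOvoid I P' w = O.1})
            (x := (⟨subtendedOvoid I P' w, w, hw, rfl⟩ : EPoint I P'))
            (show x.1 ∈ subtendedOvoid I P' w from ⟨x.2, hcol⟩) ⟨hw, rfl⟩
        · rintro hw
          obtain ⟨O, hO, hw1, hw2⟩ := Set.mem_iUnion₂.1 hw
          have : x.1 ∈ subtendedOvoid I P' w := by rw [hw2]; exact hO
          exact ⟨hw1, this.2⟩
      rw [hcover]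
      apply ncard_biUnion_eq
      · intro O₁ h₁ O₂ h₂ hne12
        rw [Set.disjoint_left]
        rintro w ⟨hw1, hw2⟩ ⟨hw3, hw4⟩
        exact hne12 (Subtype.ext (hw2.symm.trans hw4))
      · intro O hO
        obtain ⟨w₀, hw₀, hOw₀⟩ := O.2
        have : {w : P | w ∉ P' ∧ subtendedOvoid I P' w = O.1}
            = {y : P | y ∉ P' ∧ subtendedOvoid I P' y = subtendedOvoid I P' w₀} := by
          rw [hOw₀]
        rw [this]
        exact hθsub w₀ hw₀
    -- second count : partition by lines through x
    have hW2 : W.ncard = (s * t' - t') * s := by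
      have hcover : W = ⋃ U ∈ {U : ALine L' | I x.1 U.1},
          {w : P | I w U.1 ∧ w ≠ x.1} := by
        ext w
        constructor
        · rintro ⟨hw, hcol⟩
          have hwx : w ≠ x.1 := fun e => hw (e ▸ x.2)
          obtain ⟨n, hn1, hn2⟩ : ∃ n : L, I w n ∧ I x.1 n := by
            rcases hcol with ev | ⟨n, ha, hb⟩
            · exact absurd ev hwx
            · exact ⟨n, ha, hb⟩
          exact Set.mem_biUnion (show I x.1 (⟨n, hExt w n hw hn1⟩ : ALine L').1 from hn2)
            ⟨hn1, hwx⟩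
        · rintro hw
          obtain ⟨U, hU, hw1, hw2⟩ := Set.mem_iUnion₂.1 hw
          have hwP : w ∉ P' := by
            intro hwp
            exact hw2 (hL1 U.1 U.2 w x.1 hwp x.2 hw1 hU)
          exact ⟨hwP, Or.inr ⟨U.1, hw1, hU⟩⟩
      rw [hcover]
      rw [ncard_biUnion_eq _ _ s ?_ ?_, hLthru x.1 x.2]
      · intro U₁ h₁ U₂ h₂ hne12
        rw [Set.disjoint_left]
        rintro w ⟨hw1, hw2⟩ ⟨hw3, -⟩
        exact hne12 (Subtype.ext (hGQ.1 w x.1 hw2 U₁.1 U₂.1 hw1 h₁ hw3 h₂))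
      · intro U hU
        have h1 : {w : P | I w U.1 ∧ w ≠ x.1} = {w : P | I w U.1} \ {x.1} := by
          ext w; simp
        rw [h1, Set.ncard_diff_singleton_of_mem
          (show x.1 ∈ {w : P | I w U.1} from hU), hOrd1 U.1]
        omega
    rw [← hW1, hW2]
  -- rosettes through a point of S'
  have hLx : ∀ x : ↥P', {R : ELine I P' L' | ∀ O ∈ R.1, x.1 ∈ O}.ncard * s
      = {O : EPoint I P' | x.1 ∈ O.1}.ncard := by
    intro x
    have hcover : {O : EPoint I P' | x.1 ∈ O.1} = ⋃ R ∈ {R : ELine I P' L' | ∀ O ∈ R.1, x.1 ∈ O},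
        {O : EPoint I P' | EIncid I P' L' O R} := by
      ext O
      constructor
      · intro hO
        obtain ⟨R, hR1, hR2⟩ := hRosEx0 O x hO
        exact Set.mem_biUnion hR2 hR1
      · intro hO
        obtain ⟨R, hR, hO1⟩ := Set.mem_iUnion₂.1 hO
        exact hR O.1 hO1
    rw [hcover, ncard_biUnion_eq _ _ s ?_ (fun R _ => hRosCard R)]
    · intro R₁ h₁ R₂ h₂ hne12
      rw [Set.disjoint_left]
      rintro O hO1 hO2
      exact hne12 (hRosUniq O R₁ R₂ x hO1 hO2 h₁ h₂)
  -- the set of A-lines whose rosette is based at x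
  have hBx : ∀ x : ↥P', {U : ALine L' | ∀ O ∈ (gl U).1, x.1 ∈ O}.ncard = s * t' - t' := by
    intro x
    have hcover : {U : ALine L' | ∀ O ∈ (gl U).1, x.1 ∈ O}
        = ⋃ R ∈ {R : ELine I P' L' | ∀ O ∈ R.1, x.1 ∈ O}, gl ⁻¹' {R} := by
      ext U
      constructor
      · intro hU
        exact Set.mem_biUnion (show ∀ O ∈ (gl U).1, x.1 ∈ O from hU) rfl
      · intro hU
        obtain ⟨R, hR, hU1⟩ := Set.mem_iUnion₂.1 hU
        rw [Set.mem_preimage, Set.mem_singleton_iff] at hU1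
        rw [Set.mem_setOf_eq, hU1]
        exact hR
    have hc1 : {U : ALine L' | ∀ O ∈ (gl U).1, x.1 ∈ O}.ncard
        = {R : ELine I P' L' | ∀ O ∈ R.1, x.1 ∈ O}.ncard * θ := by
      rw [hcover]
      apply ncard_biUnion_eq
      · intro R₁ h₁ R₂ h₂ hne12
        rw [Set.disjoint_left]
        rintro U hU1 hU2
        rw [Set.mem_preimage, Set.mem_singleton_iff] at hU1 hU2
        exact hne12 (hU1.symm.trans hU2)
      · intro R _
        exact hfibl R
    have hc2 : {R : ELine I P' L' | ∀ O ∈ R.1, x.1 ∈ O}.ncard * θ * s = (s * t' - t') * s := by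
      calc {R : ELine I P' L' | ∀ O ∈ R.1, x.1 ∈ O}.ncard * θ * s
          = {R : ELine I P' L' | ∀ O ∈ R.1, x.1 ∈ O}.ncard * s * θ := by ring
        _ = {O : EPoint I P' | x.1 ∈ O.1}.ncard * θ := by rw [hLx x]
        _ = (s * t' - t') * s := hOthru x
    have hs0 : 0 < s := by omega
    rw [hc1]
    exact Nat.eq_of_mul_eq_mul_right hs0 hc2
  -- the A-lines whose rosette is based at x are exactly the A-lines through star x
  have hBxT : ∀ x : ↥P', {U : ALine L' | ∀ O ∈ (gl U).1, x.1 ∈ O}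
      = {U : ALine L' | I (star x).1 U.1} := by
    intro x
    apply Set.eq_of_subset_of_ncard_le
    · intro U hU
      exact hstar x U hU
    · rw [hBx x, hLthru (star x).1 (star x).2]
    · exact Set.toFinite _
  have hBxNE : ∀ x : ↥P', ∃ U : ALine L', ∀ O ∈ (gl U).1, x.1 ∈ O := by
    intro x
    obtain ⟨U, hU⟩ := Set.nonempty_of_ncard_ne_zero
      (by rw [hBx x]; omega : {U : ALine L' | ∀ O ∈ (gl U).1, x.1 ∈ O}.ncard ≠ 0)
    exact ⟨U, hU⟩
  have hstarInj : Function.Injective star := by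
    intro x x' he
    obtain ⟨U, hU⟩ := hBxNE x
    have hU' : U ∈ {U : ALine L' | ∀ O ∈ (gl U).1, x'.1 ∈ O} := by
      rw [hBxT x', ← he, ← hBxT x]
      exact hU
    exact hInAllUnique (gl U) x x' hU hU'
  have hstarSurj : Function.Surjective star := by
    intro p
    obtain ⟨U, hU⟩ := Set.nonempty_of_ncard_ne_zero
      (by rw [hLthru p.1 p.2]; omega : {U : ALine L' | I p.1 U.1}.ncard ≠ 0)
    obtain ⟨x, hx⟩ := hInAllExists (gl U)
    refine ⟨x, Subtype.ext (hL1 U.1 U.2 (star x).1 p.1 (star x).2 p.2 (hstar x U hx) hU)⟩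
  -- existence of an external point collinear with two noncollinear points of S'
  have hPerpExt : ∀ u v : ↥P', u ≠ v → ¬ Collinear (SubIncid I P' L') u v →
      ∃ z : P, z ∉ P' ∧ Collinear I z u.1 ∧ Collinear I z v.1 := by
    intro u v huv hcol
    have hnS : ¬ Collinear I u.1 v.1 := by
      rintro (e | ⟨n, h1, h2⟩)
      · exact huv (Subtype.ext e)
      · by_cases hn : n ∈ L'
        · exact hcol (Or.inr ⟨⟨n, hn⟩, h1, h2⟩)
        · exact huv (Subtype.ext (hL1 n hn u.1 v.1 u.2 v.2 h1 h2))
    set PS : Set P := {z : P | Collinear I z u.1 ∧ Collinear I z v.1} with hPSdef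
    obtain ⟨l₀, hl₀⟩ := Set.nonempty_of_ncard_ne_zero
      (by rw [hOrd2 u.1]; omega : {l : L | I u.1 l}.ncard ≠ 0)
    have hmap : ∀ z : P, ∃ n : L, z ∈ PS → I z n ∧ I u.1 n := by
      intro z
      by_cases hz : z ∈ PS
      · rcases hz.1 with e | ⟨n, h1, h2⟩
        · exact absurd (e ▸ hz.2) hnS
        · exact ⟨n, fun _ => ⟨h1, h2⟩⟩
      · exact ⟨l₀, fun h => absurd h hz⟩
    choose f hf using hmap
    have hznv : ∀ z ∈ PS, z ≠ v.1 := by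
      intro z hz e
      exact hnS (collinear_symm (e ▸ hz.1))
    have hznu : ∀ z ∈ PS, z ≠ u.1 := by
      intro z hz e
      exact hnS (e ▸ hz.2)
    have hvnotf : ∀ z ∈ PS, ¬ I v.1 (f z) := by
      intro z hz h
      exact hnS (Or.inr ⟨f z, (hf z hz).2, h⟩)
    have hfinj : Set.InjOn f PS := by
      intro z₁ h₁ z₂ h₂ he
      obtain ⟨p₁, hp₁, hp₁'⟩ : ∃ p : L, I z₁ p ∧ I v.1 p := by
        rcases h₁.2 with e | ⟨p, ha, hb⟩
        · exact absurd e (hznv z₁ h₁)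
        · exact ⟨p, ha, hb⟩
      obtain ⟨p₂, hp₂, hp₂'⟩ : ∃ p : L, I z₂ p ∧ I v.1 p := by
        rcases h₂.2 with e | ⟨p, ha, hb⟩
        · exact absurd e (hznv z₂ h₂)
        · exact ⟨p, ha, hb⟩
      obtain ⟨q, hq, hu'⟩ := hGQ.2 v.1 (f z₁) (hvnotf z₁ h₁)
      have e1 : (z₁, p₁) = q := hu' (z₁, p₁) ⟨hp₁', hp₁, (hf z₁ h₁).1⟩
      have e2 : (z₂, p₂) = q := hu' (z₂, p₂) ⟨hp₂', hp₂, he ▸ (hf z₂ h₂).1⟩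
      exact congrArg Prod.fst (e1.trans e2.symm)
    have hPScard : PS.ncard = s * t' + 1 := by
      have himg : f '' PS = {n : L | I u.1 n} := by
        apply Set.Subset.antisymm
        · rintro n ⟨z, hz, rfl⟩
          exact (hf z hz).2
        · intro n hn
          have hvn : ¬ I v.1 n := fun h => hnS (Or.inr ⟨n, hn, h⟩)
          obtain ⟨⟨z, q⟩, ⟨hq1, hq2, hq3⟩, -⟩ := hGQ.2 v.1 n hvn
          have hzPS : z ∈ PS := ⟨Or.inr ⟨n, hq3, hn⟩, Or.inr ⟨q, hq2, hq1⟩⟩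
          refine ⟨z, hzPS, ?_⟩
          exact hGQ.1 z u.1 (hznu z hzPS) (f z) n (hf z hzPS).1 (hf z hzPS).2 hq3 hn
      rw [← Set.ncard_image_of_injOn hfinj, himg, hOrd2 u.1, htst]
    have hPS'card : (PS ∩ P').ncard = t' + 1 := by
      have himg : f '' (PS ∩ P') = {n : L | n ∈ L' ∧ I u.1 n} := by
        apply Set.Subset.antisymm
        · rintro n ⟨z, ⟨hz, hzP⟩, rfl⟩
          have hnL : f z ∈ L' := by
            by_contra hn
            exact (hznu z hz) (hL1 (f z) hn z u.1 hzP u.2 (hf z hz).1 (hf z hz).2)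
          exact ⟨hnL, (hf z hz).2⟩
        · rintro n ⟨hnL, hn⟩
          have hvn : ¬ SubIncid I P' L' v ⟨n, hnL⟩ := fun h => hnS (Or.inr ⟨n, hn, h⟩)
          obtain ⟨⟨z', q'⟩, ⟨hq1, hq2, hq3⟩, -⟩ := hSubGQ.2 v ⟨n, hnL⟩ hvn
          have hzPS : z'.1 ∈ PS := ⟨Or.inr ⟨n, hq3, hn⟩, Or.inr ⟨q'.1, hq2, hq1⟩⟩
          refine ⟨z'.1, ⟨hzPS, z'.2⟩, ?_⟩
          exact hGQ.1 z'.1 u.1 (hznu z'.1 hzPS) (f z'.1) n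
            (hf z'.1 hzPS).1 (hf z'.1 hzPS).2 hq3 hn
      rw [← subline_count hSub2 u.2, ← himg,
        Set.ncard_image_of_injOn (hfinj.mono Set.inter_subset_left)]
    by_contra hno
    push_neg at hno
    have hsub : PS ⊆ P' := by
      intro z hz
      by_contra hzP
      exact hzP ((hno z hzP hz.1 hz.2).elim)
    have : PS ∩ P' = PS := Set.inter_eq_left.2 hsub
    rw [this, hPScard] at hPS'card
    have h2 : 2 * t' ≤ s * t' := Nat.mul_le_mul_right t' hs
    omega
  -- main equivalence
  have hImp1 : ∀ x y : ↥P', x ≠ y → ¬ Collinear (SubIncid I P' L') x y →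
      ¬ Collinear (SubIncid I P' L') (star x) (star y) := by
    intro x y hxy hncol
    obtain ⟨z, hz, hzx, hzy⟩ := hPerpExt x y hxy hncol
    set Oz : EPoint I P' := ⟨subtendedOvoid I P' z, z, hz, rfl⟩ with hOzdef
    have hxO : x.1 ∈ Oz.1 := ⟨x.2, hzx⟩
    have hyO : y.1 ∈ Oz.1 := ⟨y.2, hzy⟩
    obtain ⟨R₁, hR₁i, hR₁a⟩ := hRosEx0 Oz x hxO
    obtain ⟨R₂, hR₂i, hR₂a⟩ := hRosEx0 Oz y hyO
    obtain ⟨a, ha⟩ := hGpSurj Oz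
    obtain ⟨U₁, ⟨hU₁a, hU₁e⟩, -⟩ := hcov.2.1 a R₁ (by rw [ha]; exact hR₁i)
    obtain ⟨U₂, ⟨hU₂a, hU₂e⟩, -⟩ := hcov.2.1 a R₂ (by rw [ha]; exact hR₂i)
    have hIx : I (star x).1 U₁.1 := hstar x U₁ (by rw [hU₁e]; exact hR₁a)
    have hIy : I (star y).1 U₂.1 := hstar y U₂ (by rw [hU₂e]; exact hR₂a)
    have hsxO : (star x).1 ∈ subtendedOvoid I P' a.1 :=
      ⟨(star x).2, Or.inr ⟨U₁.1, hU₁a, hIx⟩⟩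
    have hsyO : (star y).1 ∈ subtendedOvoid I P' a.1 :=
      ⟨(star y).2, Or.inr ⟨U₂.1, hU₂a, hIy⟩⟩
    have hsne : star x ≠ star y := fun e => hxy (hstarInj e)
    rintro (e | ⟨m, h1, h2⟩)
    · exact hsne e
    · exact hOvNC a.1 a.2 (star x).1 (star y).1 hsxO hsyO
        (fun e => hsne (Subtype.ext e)) m.1 m.2 h1 h2
  have hImp2 : ∀ x y : ↥P', x ≠ y → ¬ Collinear (SubIncid I P' L') (star x) (star y) →
      ¬ Collinear (SubIncid I P' L') x y := by
    intro x y hxy hncol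
    have hsne : star x ≠ star y := fun e => hxy (hstarInj e)
    obtain ⟨z, hz, hzx, hzy⟩ := hPerpExt (star x) (star y) hsne hncol
    have hzsx : z ≠ (star x).1 := fun e => hz (e ▸ (star x).2)
    have hzsy : z ≠ (star y).1 := fun e => hz (e ▸ (star y).2)
    obtain ⟨m₁, hm₁z, hm₁x⟩ : ∃ n : L, I z n ∧ I (star x).1 n := by
      rcases hzx with e | ⟨n, h1, h2⟩
      · exact absurd e hzsx
      · exact ⟨n, h1, h2⟩
    obtain ⟨m₂, hm₂z, hm₂y⟩ : ∃ n : L, I z n ∧ I (star y).1 n := by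
      rcases hzy with e | ⟨n, h1, h2⟩
      · exact absurd e hzsy
      · exact ⟨n, h1, h2⟩
    set U₁ : ALine L' := ⟨m₁, hExt z m₁ hz hm₁z⟩ with hU₁def
    set U₂ : ALine L' := ⟨m₂, hExt z m₂ hz hm₂z⟩ with hU₂def
    have hU₁B : ∀ O ∈ (gl U₁).1, x.1 ∈ O := by
      have h3 : U₁ ∈ {U : ALine L' | I (star x).1 U.1} := hm₁x
      rw [← hBxT x] at h3
      exact h3
    have hU₂B : ∀ O ∈ (gl U₂).1, y.1 ∈ O := by
      have h3 : U₂ ∈ {U : ALine L' | I (star y).1 U.1} := hm₂y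
      rw [← hBxT y] at h3
      exact h3
    have hz₁ : EIncid I P' L' (gp ⟨z, hz⟩) (gl U₁) := hcov.1 ⟨z, hz⟩ U₁ hm₁z
    have hz₂ : EIncid I P' L' (gp ⟨z, hz⟩) (gl U₂) := hcov.1 ⟨z, hz⟩ U₂ hm₂z
    have hxin : x.1 ∈ (gp ⟨z, hz⟩).1 := hU₁B _ hz₁
    have hyin : y.1 ∈ (gp ⟨z, hz⟩).1 := hU₂B _ hz₂
    obtain ⟨w, hw, hOw⟩ := (gp ⟨z, hz⟩).2
    rw [hOw] at hxin hyin
    rintro (e | ⟨m, h1, h2⟩)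
    · exact hxy e
    · exact hOvNC w hw x.1 y.1 hxin hyin (fun e => hxy (Subtype.ext e)) m.1 m.2 h1 h2
  have hMain : ∀ x y : ↥P', x ≠ y →
      (Collinear (SubIncid I P' L') (star x) (star y) ↔ Collinear (SubIncid I P' L') x y) := by
    intro x y hxy
    constructor
    · intro h
      by_contra hn
      exact hImp1 x y hxy hn h
    · intro h
      by_contra hn
      exact hImp2 x y hxy hn h
  -- construction of the line map
  have hTwoSub : ∀ n : ↥L', ∃ u v : ↥P', u ≠ v ∧
      SubIncid I P' L' u n ∧ SubIncid I P' L' v n := by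
    intro n
    obtain ⟨u, hu, v, hv, huv⟩ := (Set.one_lt_ncard (Set.toFinite _)).1
      (by rw [hSub1 n]; omega : 1 < {x : ↥P' | SubIncid I P' L' x n}.ncard)
    exact ⟨u, v, huv, hu, hv⟩
  have hJoinSub : ∀ u v : ↥P', u ≠ v → Collinear (SubIncid I P' L') u v →
      ∃ m : ↥L', SubIncid I P' L' u m ∧ SubIncid I P' L' v m := by
    intro u v huv h
    rcases h with e | ⟨m, h1, h2⟩
    · exact absurd e huv
    · exact ⟨m, h1, h2⟩
  have hsl : ∀ n : ↥L', ∃ m : ↥L', ∀ z : ↥P',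
      SubIncid I P' L' z n → SubIncid I P' L' (star z) m := by
    intro n
    obtain ⟨u, v, huv, hun, hvn⟩ := hTwoSub n
    have hcoluv : Collinear (SubIncid I P' L') (star u) (star v) :=
      (hMain u v huv).2 (Or.inr ⟨n, hun, hvn⟩)
    have hsuv : star u ≠ star v := fun e => huv (hstarInj e)
    obtain ⟨m, hm1, hm2⟩ := hJoinSub (star u) (star v) hsuv hcoluv
    refine ⟨m, fun z hz => ?_⟩
    by_cases hzu : z = u
    · rw [hzu]; exact hm1
    by_cases hzv : z = v
    · rw [hzv]; exact hm2
    have hc1 : Collinear (SubIncid I P' L') (star z) (star u) :=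
      (hMain z u hzu).2 (Or.inr ⟨n, hz, hun⟩)
    have hc2 : Collinear (SubIncid I P' L') (star z) (star v) :=
      (hMain z v hzv).2 (Or.inr ⟨n, hz, hvn⟩)
    have hszu : star z ≠ star u := fun e => hzu (hstarInj e)
    have hszv : star z ≠ star v := fun e => hzv (hstarInj e)
    obtain ⟨p₁, hp₁, hp₁'⟩ := hJoinSub _ _ hszu hc1
    obtain ⟨p₂, hp₂, hp₂'⟩ := hJoinSub _ _ hszv hc2
    by_contra hzm
    obtain ⟨q, hq, hu'⟩ := hSubGQ.2 (star z) m hzm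
    have e1 : (star u, p₁) = q := hu' (star u, p₁) ⟨hp₁, hp₁', hm1⟩
    have e2 : (star v, p₂) = q := hu' (star v, p₂) ⟨hp₂, hp₂', hm2⟩
    exact hsuv (congrArg Prod.fst (e1.trans e2.symm))
  choose starl hsl' using hsl
  have hIncBack : ∀ (n : ↥L') (z : ↥P'),
      SubIncid I P' L' (star z) (starl n) → SubIncid I P' L' z n := by
    intro n z hz
    have himg : star '' {w : ↥P' | SubIncid I P' L' w n}
        = {w : ↥P' | SubIncid I P' L' w (starl n)} := by
      apply Set.eq_of_subset_of_ncard_le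
      · rintro w ⟨w', hw', rfl⟩
        exact hsl' n w' hw'
      · rw [Set.ncard_image_of_injOn hstarInj.injOn, hSub1 n, hSub1 (starl n)]
      · exact Set.toFinite _
    have h3 : star z ∈ star '' {w : ↥P' | SubIncid I P' L' w n} := by
      rw [himg]; exact hz
    obtain ⟨w, hw, he⟩ := h3
    rw [← hstarInj he]
    exact hw
  have hstarlInj : Function.Injective starl := by
    intro n n' he
    obtain ⟨u, v, huv, hun, hvn⟩ := hTwoSub n
    have h1 : SubIncid I P' L' u n' := hIncBack n' u (by rw [← he]; exact hsl' n u hun)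
    have h2 : SubIncid I P' L' v n' := hIncBack n' v (by rw [← he]; exact hsl' n v hvn)
    exact Subtype.ext (hGQ.1 u.1 v.1 (fun e => huv (Subtype.ext e)) n.1 n'.1 hun hvn h1 h2)
  have hstarlSurj : Function.Surjective starl := by
    intro m
    obtain ⟨u, v, huv, hum, hvm⟩ := hTwoSub m
    obtain ⟨x, hx⟩ := hstarSurj u
    obtain ⟨y, hy⟩ := hstarSurj v
    have hxy : x ≠ y := fun e => huv (by rw [← hx, ← hy, e])
    have hcolst : Collinear (SubIncid I P' L') (star x) (star y) := by
      rw [hx, hy]; exact Or.inr ⟨m, hum, hvm⟩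
    have hcol := (hMain x y hxy).1 hcolst
    obtain ⟨n, hn1, hn2⟩ := hJoinSub x y hxy hcol
    refine ⟨n, ?_⟩
    have h1 : SubIncid I P' L' u (starl n) := by rw [← hx]; exact hsl' n x hn1
    have h2 : SubIncid I P' L' v (starl n) := by rw [← hy]; exact hsl' n y hn2
    exact Subtype.ext (hGQ.1 u.1 v.1 (fun e => huv (Subtype.ext e)) (starl n).1 m.1 h1 h2 hum hvm)
  exact ⟨hMain, starl, ⟨hstarInj, hstarSurj⟩, ⟨hstarlInj, hstarlSurj⟩,
    fun z n => ⟨fun h => hsl' n z h, fun h => hIncBack n z h⟩⟩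








end GQpaper
end

section
/- Let S be a thick generalized quadrangle and S' a thick full proper subquadrangle of S. Then for every point x of S not belonging to S', the set x⊥ ∩ P' (the points of S' collinear in S with x) is an ovoid of S'. -/
namespace GQpaper

variable {P L : Type}

/-- in a thick GQ with a thick full proper subquadrangle, every external
point subtends an ovoid of the subquadrangle. -/
theorem statement18 (I : P → L → Prop) (P' : Set P) (L' : Set L)
    (hGQ : IsGQ I) (hThick : Thick I)
    (hSubGQ : IsGQ (SubIncid I P' L')) (hSubThick : Thick (SubIncid I P' L'))
    (hFull : IsFull I P' L')
    (hProper : P' ≠ Set.univ ∨ L' ≠ Set.univ) :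
    ∀ x : P, x ∉ P' → IsOvoid I P' L' (subtendedOvoid I P' x) := by
  intro x hx
  constructor
  · intro y hy; exact hy.1
  · intro l hl
    have hxl : ¬ I x l := fun h => hx (hFull l hl x h)
    obtain ⟨⟨y, M⟩, ⟨hxM, hyM, hyl⟩, huniq⟩ := hGQ.2 x l hxl
    refine ⟨y, ⟨⟨hFull l hl y hyl, Or.inr ⟨M, hxM, hyM⟩⟩, hyl⟩, ?_⟩
    rintro z ⟨⟨hzP, hcol⟩, hzl⟩
    rcases hcol with rfl | ⟨N, hxN, hzN⟩
    · exact absurd hzP hx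
    · have := huniq (z, N) ⟨hxN, hzN, hzl⟩
      exact congrArg Prod.fst this

end GQpaper
end
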